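/- With the malicious-agent setup, for every fixed d ≥ 0 there exists ε ∈ (0,1) such that the function λ ↦ e(λ, d) is strictly increasing on the interval (1 − ε, 1]. Consequently, every λ* ∈ (0,1] that minimizes e(·, d) over (0,1] satisfies λ* < 1. -/

import Mathlib

open Matrix

lemma aux_contDiffAt_det {ι : Type*} [Fintype ι] [DecidableEq ι]
    {A : ℝ → Matrix ι ι ℝ} {x : ℝ} {n : WithTop ℕ∞}
    (h : ∀ i j, ContDiffAt ℝ n (fun t => A t i j) x) :
    ContDiffAt ℝ n (fun t => (A t).det) x := by
  simp only [Matrix.det_apply']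
  exact ContDiffAt.sum fun σ _ =>
    contDiffAt_const.mul (contDiffAt_prod fun i _ => h (σ i) i)

set_option maxHeartbeats 2000000 in
/-- In the malicious-agent setup, for every fixed `d ≥ 0` the map
`λ ↦ e(λ, d)` is strictly increasing on some interval `(1 − ε, 1]` with `ε ∈ (0,1)`;
consequently every minimizer `λ*` of `e(·, d)` over `(0,1]` satisfies `λ* < 1`. -/
theorem optimal_lambda_lt_one
    (R M : ℕ) (hR : 2 ≤ R) (hM : 1 ≤ M)
    (W0 : Matrix (Fin R ⊕ Fin M) (Fin R ⊕ Fin M) ℝ)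
    (hW0symm : W0.IsSymm)
    (hW0nonneg : ∀ i j, 0 ≤ W0 i j)
    (hW0row : ∀ i, ∑ j, W0 i j = 1)
    (hW0diag : ∀ i, W0 i i = 0)
    (hW0irr : ∀ i j, ∃ k : ℕ, 0 < (W0 ^ k) i j)
    (W : Matrix (Fin R ⊕ Fin M) (Fin R ⊕ Fin M) ℝ)
    (hW : W = Matrix.fromBlocks W0.toBlocks₁₁ W0.toBlocks₁₂ 0 1)
    (hW12 : W0.toBlocks₁₂ ≠ 0)
    (L : ℝ → Matrix (Fin R ⊕ Fin M) (Fin R ⊕ Fin M) ℝ)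
    (hL : ∀ lam : ℝ, L lam = lam • (1 - (1 - lam) • W)⁻¹)
    (S : Matrix (Fin R) (Fin R ⊕ Fin M) ℝ)
    (hS : S = Matrix.of fun i j => if j = Sum.inl i then 1 else 0)
    (CR : Matrix (Fin R) (Fin R) ℝ)
    (hCR : CR = Matrix.of fun _ _ => (R : ℝ)⁻¹)
    (V : Matrix (Fin R ⊕ Fin M) (Fin R ⊕ Fin M) ℝ)
    (hV : V = Matrix.fromBlocks 0 0 0 1)
    (E : ℝ → Matrix (Fin R) (Fin R ⊕ Fin M) ℝ)
    (hE : ∀ lam : ℝ, E lam = S * L lam - CR * S)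
    (e : ℝ → ℝ → ℝ)
    (he : ∀ (lam d : ℝ), e lam d = ((1 + d • V) * (E lam)ᵀ * E lam).trace)
    (d : ℝ) (hd : 0 ≤ d) :
    (∃ ε ∈ Set.Ioo (0 : ℝ) 1,
        StrictMonoOn (fun lam => e lam d) (Set.Ioc (1 - ε) 1))
    ∧ ∀ lamStar ∈ Set.Ioc (0 : ℝ) 1,
        (∀ lam ∈ Set.Ioc (0 : ℝ) 1, e lamStar d ≤ e lam d) → lamStar < 1 := by
  classical
  -- the resolvent-type matrix
  set g : ℝ → Matrix (Fin R ⊕ Fin M) (Fin R ⊕ Fin M) ℝ :=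
    (fun t => 1 - (1 - t) • W) with hg
  set u : ℝ → Matrix (Fin R ⊕ Fin M) (Fin R ⊕ Fin M) ℝ :=
    (fun t => (g t)⁻¹) with hu
  have hgentry : ∀ (i j) (t : ℝ),
      g t i j = (1 : Matrix (Fin R ⊕ Fin M) (Fin R ⊕ Fin M) ℝ) i j - (1 - t) * W i j := by
    intro i j t
    simp [hg, Matrix.sub_apply, Matrix.smul_apply, smul_eq_mul]
  have hgcd : ∀ i j, ContDiff ℝ 1 (fun t => g t i j) := by
    intro i j
    have : (fun t => g t i j)
        = fun t => (1 : Matrix (Fin R ⊕ Fin M) (Fin R ⊕ Fin M) ℝ) i j - (1 - t) * W i j :=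
      funext fun t => hgentry i j t
    rw [this]
    exact contDiff_const.sub ((contDiff_const.sub contDiff_id).mul contDiff_const)
  have hgd : ∀ (i j) (t0 : ℝ), HasDerivAt (fun t => g t i j) (W i j) t0 := by
    intro i j t0
    have h : (fun t => g t i j)
        = fun t => (1 : Matrix (Fin R ⊕ Fin M) (Fin R ⊕ Fin M) ℝ) i j - (1 - t) * W i j :=
      funext fun t => hgentry i j t
    rw [h]
    have := (((hasDerivAt_const t0 (1:ℝ)).sub (hasDerivAt_id t0)).mul
      (hasDerivAt_const t0 (W i j))).const_sub
      ((1 : Matrix (Fin R ⊕ Fin M) (Fin R ⊕ Fin M) ℝ) i j)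
    simpa using this
  have hg1 : g 1 = 1 := by simp [hg]
  have hu1 : u 1 = 1 := by rw [hu]; simp only; rw [hg1, inv_one]
  have hu_entry : ∀ (t : ℝ) (i j), u t i j = ((g t).det)⁻¹ * (g t).adjugate i j := by
    intro t i j
    rw [hu]
    simp only
    rw [Matrix.inv_def, Ring.inverse_eq_inv]
    simp [Matrix.smul_apply, smul_eq_mul]
  have hdetcd : ∀ x : ℝ, ContDiffAt ℝ 1 (fun t => (g t).det) x := fun x =>
    aux_contDiffAt_det fun i j => (hgcd i j).contDiffAt
  have hadj : ∀ (i j) (x : ℝ), ContDiffAt ℝ 1 (fun t => (g t).adjugate i j) x := by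
    intro i j x
    simp only [Matrix.adjugate_apply]
    apply aux_contDiffAt_det
    intro a b
    rcases eq_or_ne a j with rfl | hne
    · simp only [Matrix.updateRow_apply, if_pos rfl]
      exact contDiffAt_const
    · simp only [Matrix.updateRow_apply, if_neg hne]
      exact (hgcd a b).contDiffAt
  have hp1 : (g 1).det = 1 := by rw [hg1]; simp
  have hnev : ∀ᶠ t in nhds (1:ℝ), (g t).det ≠ 0 := by
    apply (hdetcd 1).continuousAt.eventually_ne
    rw [hp1]; norm_num
  obtain ⟨ε0, hε0, hball⟩ := Metric.eventually_nhds_iff_ball.mp hnev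
  set I : Set ℝ := Metric.ball (1:ℝ) ε0 with hI
  have h1I : (1:ℝ) ∈ I := Metric.mem_ball_self hε0
  have hu_cd : ∀ x ∈ I, ∀ i j, ContDiffAt ℝ 1 (fun t => u t i j) x := by
    intro x hx i j
    have h := ((hdetcd x).inv (hball x hx)).mul (hadj i j x)
    have hfeq : (fun t => u t i j) = fun t => ((g t).det)⁻¹ * (g t).adjugate i j :=
      funext fun t => hu_entry t i j
    rw [hfeq]
    exact h
  have hudiff : ∀ i j, DifferentiableAt ℝ (fun t => u t i j) 1 := fun i j =>
    (hu_cd 1 h1I i j).differentiableAt one_ne_zero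
  -- derivative of the inverse entries at 1
  have hu' : ∀ i j, HasDerivAt (fun t => u t i j) (-W i j) 1 := by
    intro i j
    have hsum : ∀ᶠ t in nhds (1:ℝ),
        (∑ k, g t i k * u t k j)
          = (1 : Matrix (Fin R ⊕ Fin M) (Fin R ⊕ Fin M) ℝ) i j := by
      filter_upwards [hnev] with t ht
      have hmul := Matrix.mul_nonsing_inv (g t) (isUnit_iff_ne_zero.mpr ht)
      calc ∑ k, g t i k * u t k j = (g t * u t) i j := by rw [Matrix.mul_apply]
        _ = (1 : Matrix (Fin R ⊕ Fin M) (Fin R ⊕ Fin M) ℝ) i j := by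
            rw [hu]; simp only; rw [hmul]
    have h1 : HasDerivAt (fun t => ∑ k, g t i k * u t k j)
        (∑ k, (W i k * u 1 k j + g 1 i k * deriv (fun t => u t k j) 1)) 1 :=
      HasDerivAt.fun_sum fun k _ => (hgd i k 1).mul (hudiff k j).hasDerivAt
    have h2 : HasDerivAt (fun t => ∑ k, g t i k * u t k j) 0 1 :=
      (hasDerivAt_const 1 ((1 : Matrix (Fin R ⊕ Fin M) (Fin R ⊕ Fin M) ℝ) i j)).congr_of_eventuallyEq
        hsum
    have h0 := h1.unique h2
    rw [hg1, hu1] at h0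
    simp [Matrix.one_apply, mul_ite, ite_mul, Finset.sum_add_distrib] at h0
    have h3 : deriv (fun t => u t i j) 1 = -W i j := by linarith
    exact h3 ▸ (hudiff i j).hasDerivAt
  -- entries of E
  have hEent : ∀ (t : ℝ) (i j), E t i j = t * u t (Sum.inl i) j - (CR * S) i j := by
    intro t i j
    rw [hE, hL]
    have : (1 : Matrix (Fin R ⊕ Fin M) (Fin R ⊕ Fin M) ℝ) - (1 - t) • W = g t := rfl
    rw [this]
    simp [Matrix.sub_apply, Matrix.mul_apply, hS, Matrix.smul_apply, smul_eq_mul, ite_mul,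
      Finset.sum_ite_eq']
    exact Or.inl rfl
  have hCRS1 : ∀ i i', (CR * S) i (Sum.inl i') = (R : ℝ)⁻¹ := by
    intro i i'
    simp [Matrix.mul_apply, hCR, hS, mul_ite, Finset.sum_ite_eq]
  have hCRS2 : ∀ i m, (CR * S) i (Sum.inr m) = 0 := by
    intro i m
    simp [Matrix.mul_apply, hCR, hS]
  have hE1 : ∀ i j, E 1 i j
      = (1 : Matrix (Fin R ⊕ Fin M) (Fin R ⊕ Fin M) ℝ) (Sum.inl i) j - (CR * S) i j := by
    intro i j
    rw [hEent, hu1, one_mul]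
  have hE' : ∀ i j, HasDerivAt (fun t => E t i j)
      ((1 : Matrix (Fin R ⊕ Fin M) (Fin R ⊕ Fin M) ℝ) (Sum.inl i) j - W (Sum.inl i) j) 1 := by
    intro i j
    have h : HasDerivAt (fun t : ℝ => t * u t (Sum.inl i) j - (CR * S) i j)
        (1 * u 1 (Sum.inl i) j + 1 * -W (Sum.inl i) j) 1 :=
      ((hasDerivAt_id' (x := (1:ℝ))).mul (hu' (Sum.inl i) j)).sub_const ((CR * S) i j)
    have heq : (fun t : ℝ => t * u t (Sum.inl i) j - (CR * S) i j) = fun t => E t i j :=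
      funext fun t => (hEent t i j).symm
    rw [heq] at h
    convert h using 1
    rw [hu1]
    ring
  have hEcd : ∀ x ∈ I, ∀ i j, ContDiffAt ℝ 1 (fun t => E t i j) x := by
    intro x hx i j
    have h : ContDiffAt ℝ 1 (fun t : ℝ => t * u t (Sum.inl i) j - (CR * S) i j) x :=
      (contDiffAt_id.mul (hu_cd x hx (Sum.inl i) j)).sub contDiffAt_const
    have heq : (fun t => E t i j) = fun t : ℝ => t * u t (Sum.inl i) j - (CR * S) i j :=
      funext fun t => hEent t i j
    rw [heq]
    exact h
  -- the diagonal weights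
  set cc : (Fin R ⊕ Fin M) → ℝ := Sum.elim (fun _ => (1:ℝ)) (fun _ => 1 + d) with hcc
  have hfe : ∀ t : ℝ, e t d = ∑ j, ∑ i, cc j * (E t i j * E t i j) := by
    intro t
    rw [he]
    have hA : ∀ j k, ((1 : Matrix (Fin R ⊕ Fin M) (Fin R ⊕ Fin M) ℝ) + d • V) j k
        = if j = k then cc j else 0 := by
      intro j k
      rw [hV]
      rcases j with j | j <;> rcases k with k | k
      · simp only [Matrix.add_apply, Matrix.smul_apply, Matrix.fromBlocks_apply₁₁,
          Matrix.zero_apply, smul_eq_mul, mul_zero, add_zero, Matrix.one_apply, hcc,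
          Sum.inl.injEq, Sum.elim_inl]
      · simp only [Matrix.add_apply, Matrix.smul_apply, Matrix.fromBlocks_apply₁₂,
          Matrix.zero_apply, smul_eq_mul, mul_zero, add_zero, Matrix.one_apply]
        rw [if_neg (by simp), if_neg (by simp)]
      · simp only [Matrix.add_apply, Matrix.smul_apply, Matrix.fromBlocks_apply₂₁,
          Matrix.zero_apply, smul_eq_mul, mul_zero, add_zero, Matrix.one_apply]
        rw [if_neg (by simp), if_neg (by simp)]
      · simp only [Matrix.add_apply, Matrix.smul_apply, Matrix.fromBlocks_apply₂₂,
          smul_eq_mul, Matrix.one_apply, hcc, Sum.inr.injEq, Sum.elim_inr]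
        split_ifs <;> ring
    rw [Matrix.trace]
    simp only [Matrix.diag_apply, Matrix.mul_apply, Matrix.transpose_apply, hA, ite_mul,
      zero_mul, Finset.sum_ite_eq, Finset.mem_univ, if_true]
    exact Finset.sum_congr rfl fun j _ => Finset.sum_congr rfl fun i _ => by ring
  -- derivative of e at 1
  set D : ℝ := ∑ j, ∑ i, cc j *
      (((1 : Matrix (Fin R ⊕ Fin M) (Fin R ⊕ Fin M) ℝ) (Sum.inl i) j - W (Sum.inl i) j) * E 1 i j
        + E 1 i j *
          ((1 : Matrix (Fin R ⊕ Fin M) (Fin R ⊕ Fin M) ℝ) (Sum.inl i) j - W (Sum.inl i) j))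
    with hD
  have hfD : HasDerivAt (fun t => e t d) D 1 := by
    have h : HasDerivAt (fun t => ∑ j, ∑ i, cc j * (E t i j * E t i j)) D 1 := by
      rw [hD]
      exact HasDerivAt.fun_sum fun j _ => HasDerivAt.fun_sum fun i _ =>
        (((hE' i j).mul (hE' i j)).const_mul (cc j))
    have heq : (fun t => e t d) = fun t => ∑ j, ∑ i, cc j * (E t i j * E t i j) :=
      funext fun t => hfe t
    rw [heq]
    exact h
  have hW11 : ∀ i i', W (Sum.inl i) (Sum.inl i') = W0 (Sum.inl i) (Sum.inl i') := by
    intro i i'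
    rw [hW]
    simp [Matrix.fromBlocks, Matrix.toBlocks₁₁]
  have hRpos : (0:ℝ) < R := by positivity
  have hcle : (R:ℝ)⁻¹ ≤ 2⁻¹ := by
    apply inv_anti₀ (by norm_num)
    exact_mod_cast hR
  -- positivity of D
  have hDpos : 0 < D := by
    rw [hD]
    apply Finset.sum_pos'
    · rintro (i' | m) -
      · apply Finset.sum_nonneg
        intro i _
        have hE1v : E 1 i (Sum.inl i') = (if i = i' then (1:ℝ) else 0) - (R:ℝ)⁻¹ := by
          rw [hE1, hCRS1]
          simp [Matrix.one_apply]
        have hone : (1 : Matrix (Fin R ⊕ Fin M) (Fin R ⊕ Fin M) ℝ) (Sum.inl i) (Sum.inl i')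
            = (if i = i' then (1:ℝ) else 0) := by simp [Matrix.one_apply]
        rw [hE1v, hone, hcc]
        simp only [Sum.elim_inl, one_mul]
        rcases eq_or_ne i i' with rfl | hii
        · rw [if_pos rfl, hW11, hW0diag]
          nlinarith [hcle]
        · rw [if_neg hii]
          have hw0 : 0 ≤ W (Sum.inl i) (Sum.inl i') := by rw [hW11]; exact hW0nonneg _ _
          have : (0:ℝ) ≤ (R:ℝ)⁻¹ := by positivity
          nlinarith
      · apply Finset.sum_nonneg
        intro i _
        have hE1v : E 1 i (Sum.inr m) = 0 := by
          rw [hE1, hCRS2]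
          simp [Matrix.one_apply]
        rw [hE1v]
        simp
    · refine ⟨Sum.inl ⟨0, by omega⟩, Finset.mem_univ _, ?_⟩
      apply Finset.sum_pos'
      · intro i _
        have hE1v : E 1 i (Sum.inl ⟨0, by omega⟩)
            = (if i = ⟨0, by omega⟩ then (1:ℝ) else 0) - (R:ℝ)⁻¹ := by
          rw [hE1, hCRS1]
          simp [Matrix.one_apply]
        have hone : (1 : Matrix (Fin R ⊕ Fin M) (Fin R ⊕ Fin M) ℝ) (Sum.inl i) (Sum.inl ⟨0, by omega⟩)
            = (if i = ⟨0, by omega⟩ then (1:ℝ) else 0) := by simp [Matrix.one_apply]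
        rw [hE1v, hone, hcc]
        simp only [Sum.elim_inl, one_mul]
        rcases eq_or_ne i ⟨0, by omega⟩ with heq | hii
        · rw [if_pos heq, heq, hW11, hW0diag]
          nlinarith [hcle]
        · rw [if_neg hii]
          have hw0 : 0 ≤ W (Sum.inl i) (Sum.inl ⟨0, by omega⟩) := by
            rw [hW11]; exact hW0nonneg _ _
          have : (0:ℝ) ≤ (R:ℝ)⁻¹ := by positivity
          nlinarith
      · refine ⟨⟨0, by omega⟩, Finset.mem_univ _, ?_⟩
        have hE1v : E 1 ⟨0, by omega⟩ (Sum.inl ⟨0, by omega⟩)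
            = 1 - (R:ℝ)⁻¹ := by
          rw [hE1, hCRS1]
          simp [Matrix.one_apply]
        have hone : (1 : Matrix (Fin R ⊕ Fin M) (Fin R ⊕ Fin M) ℝ)
            (Sum.inl ⟨0, by omega⟩) (Sum.inl ⟨0, by omega⟩) = 1 := by simp [Matrix.one_apply]
        rw [hE1v, hone, hcc]
        simp only [Sum.elim_inl, one_mul]
        rw [hW11, hW0diag]
        nlinarith [hcle]
  -- smoothness of e on I
  have hfC : ContDiffOn ℝ 1 (fun t => e t d) I := by
    intro x hx
    apply ContDiffAt.contDiffWithinAt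
    have h : ContDiffAt ℝ 1 (fun t => ∑ j, ∑ i, cc j * (E t i j * E t i j)) x :=
      ContDiffAt.sum fun j _ => ContDiffAt.sum fun i _ =>
        contDiffAt_const.mul ((hEcd x hx i j).mul (hEcd x hx i j))
    have heq : (fun t => e t d) = fun t => ∑ j, ∑ i, cc j * (E t i j * E t i j) :=
      funext fun t => hfe t
    rw [heq]
    exact h
  have hdiffOn : DifferentiableOn ℝ (fun t => e t d) I := hfC.differentiableOn one_ne_zero
  have hderivCont : ContinuousOn (deriv fun t => e t d) I :=
    hfC.continuousOn_deriv_of_isOpen Metric.isOpen_ball le_rfl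
  have hderiv1 : deriv (fun t => e t d) 1 = D := hfD.deriv
  have hca : ContinuousAt (deriv fun t => e t d) 1 :=
    hderivCont.continuousAt (Metric.isOpen_ball.mem_nhds h1I)
  have hev : ∀ᶠ x in nhds (1:ℝ), 0 < deriv (fun t => e t d) x := by
    have := hca.preimage_mem_nhds (Ioi_mem_nhds (show (0:ℝ) < deriv (fun t => e t d) 1 by
      rw [hderiv1]; exact hDpos))
    filter_upwards [this] with x hx
    exact hx
  have hI' : ∀ᶠ x in nhds (1:ℝ), x ∈ I := Metric.isOpen_ball.mem_nhds h1I
  obtain ⟨ε1, hε1, hball1⟩ := Metric.eventually_nhds_iff_ball.mp (hev.and hI')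
  set ε : ℝ := min (ε1 / 2) (1/2 : ℝ) with hε
  have hεpos : 0 < ε := by
    apply lt_min (by linarith) (by norm_num)
  have hεlt1 : ε < 1 := lt_of_le_of_lt (min_le_right _ _) (by norm_num)
  have hsub : Set.Ioc (1 - ε) 1 ⊆ Metric.ball (1:ℝ) ε1 := by
    intro x hx
    rw [Real.ball_eq_Ioo]
    constructor
    · have : 1 - ε1 < 1 - ε := by
        have : ε ≤ ε1 / 2 := min_le_left _ _
        linarith
      linarith [hx.1]
    · linarith [hx.2]
  have hsubI : Set.Ioc (1 - ε) 1 ⊆ I := fun x hx => (hball1 x (hsub hx)).2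
  have hmono : StrictMonoOn (fun lam => e lam d) (Set.Ioc (1 - ε) 1) := by
    apply strictMonoOn_of_deriv_pos (convex_Ioc _ _)
    · exact (hdiffOn.continuousOn).mono hsubI
    · intro x hx
      rw [interior_Ioc] at hx
      exact (hball1 x (hsub ⟨hx.1, le_of_lt hx.2⟩)).1
  constructor
  · exact ⟨ε, ⟨hεpos, hεlt1⟩, hmono⟩
  · intro lamStar hlamStar hmin
    by_contra hcon
    push_neg at hcon
    have hstar1 : lamStar = 1 := le_antisymm hlamStar.2 hcon
    set x0 : ℝ := 1 - ε / 2 with hx0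
    have hx0mem : x0 ∈ Set.Ioc (1 - ε) 1 := by
      constructor <;> [skip; skip] <;> simp [hx0] <;> linarith
    have h1mem : (1:ℝ) ∈ Set.Ioc (1 - ε) 1 := ⟨by linarith, le_refl _⟩
    have hlt : e x0 d < e 1 d := hmono hx0mem h1mem (by simp [hx0]; linarith)
    have hx0mem' : x0 ∈ Set.Ioc (0:ℝ) 1 := ⟨by simp [hx0]; linarith, by simp [hx0]; linarith⟩
    have := hmin x0 hx0mem'
    rw [hstar1] at this
    linarith
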